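/- Let B be a bounded quasinilpotent operator on a Hilbert space H, f, g ∈ H, g(z) := (I − zB)⁻¹ g, f_*(w) := (I + wB*)⁻¹ f and φ(z) := 1 − z⟨g(z), f⟩. If λ is a zero of φ and μ is arbitrary with μ ≠ λ, then ⟨g(λ), f_*(−conj(μ))⟩ = −φ(μ)/(μ − λ). In particular if λ and ν are two distinct zeros of φ, then ⟨g(λ), f_*(−conj(ν))⟩ = 0. -/

import Mathlib

theorem biorthogonality_at_zero
    {H : Type*} [NormedAddCommGroup H] [InnerProductSpace ℂ H] [CompleteSpace H]
    (B : H →L[ℂ] H) (hB : spectrum ℂ B = {0}) (f g : H)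
    (gfun : ℂ → H) (hg : ∀ z : ℂ, gfun z = (Ring.inverse (1 - z • B) : H →L[ℂ] H) g)
    (fstar : ℂ → H)
    (hf : ∀ w : ℂ,
      fstar w = (Ring.inverse (1 + w • ContinuousLinearMap.adjoint B) : H →L[ℂ] H) f)
    (φ : ℂ → ℂ) (hφ : ∀ z : ℂ, φ z = 1 - z * (inner ℂ f (gfun z) : ℂ)) :
    (∀ lam mu : ℂ, φ lam = 0 → mu ≠ lam →
        (inner ℂ (fstar (-(starRingEnd ℂ mu))) (gfun lam) : ℂ) = -φ mu / (mu - lam)) ∧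
      (∀ lam nu : ℂ, φ lam = 0 → φ nu = 0 → lam ≠ nu →
        (inner ℂ (fstar (-(starRingEnd ℂ nu))) (gfun lam) : ℂ) = 0) := by
  classical
  set U : ℂ → (H →L[ℂ] H) := fun z => 1 - z • B with hUdef
  have hU : ∀ z : ℂ, IsUnit (U z) := by
    intro z
    rcases eq_or_ne z 0 with rfl | hz
    · simp [hUdef]
    · have h1 : (z : ℂ)⁻¹ ∉ spectrum ℂ B := by
        rw [hB]; simpa using inv_ne_zero hz
      rw [spectrum.notMem_iff] at h1
      have h2 : U z = (algebraMap ℂ (H →L[ℂ] H) z) * (algebraMap ℂ (H →L[ℂ] H) z⁻¹ - B) := by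
        simp [hUdef, Algebra.algebraMap_eq_smul_one, mul_sub, smul_mul_assoc, smul_smul,
          mul_inv_cancel₀ hz, inv_mul_cancel₀ hz, smul_sub]
      rw [h2]
      exact ((isUnit_iff_ne_zero.mpr hz).map (algebraMap ℂ (H →L[ℂ] H))).mul h1
  set R : ℂ → (H →L[ℂ] H) := fun z => Ring.inverse (U z) with hRdef
  -- commutation
  have hcomm : ∀ lam mu : ℂ, U mu * U lam = U lam * U mu := by
    intro lam mu
    simp only [hUdef, mul_sub, sub_mul, one_mul, mul_one, smul_mul_assoc, mul_smul_comm,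
      smul_smul]
    simp only [smul_sub, smul_smul]
    module
  have hres : ∀ lam mu : ℂ, (mu - lam) • (R mu * R lam) = mu • R mu - lam • R lam := by
    intro lam mu
    have hcancel := (hU mu).mul (hU lam)
    apply IsUnit.mul_right_cancel hcancel
    have e1 : (mu - lam) • (R mu * R lam) * (U mu * U lam) = (mu - lam) • (1 : H →L[ℂ] H) := by
      rw [smul_mul_assoc]
      congr 1
      calc R mu * R lam * (U mu * U lam) = R mu * (R lam * (U lam * U mu)) := by
            rw [hcomm]; noncomm_ring
        _ = R mu * (R lam * U lam * U mu) := by noncomm_ring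
        _ = R mu * U mu := by rw [Ring.inverse_mul_cancel _ (hU lam), one_mul]
        _ = 1 := Ring.inverse_mul_cancel _ (hU mu)
    have e2 : (mu • R mu - lam • R lam) * (U mu * U lam) = (mu - lam) • (1 : H →L[ℂ] H) := by
      have a1 : R mu * (U mu * U lam) = U lam := by
        rw [← mul_assoc, Ring.inverse_mul_cancel _ (hU mu), one_mul]
      have a2 : R lam * (U mu * U lam) = U mu := by
        rw [hcomm, ← mul_assoc, Ring.inverse_mul_cancel _ (hU lam), one_mul]
      rw [sub_mul, smul_mul_assoc, smul_mul_assoc, a1, a2]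
      simp only [hUdef, smul_sub, smul_smul, sub_smul]
      module
    rw [e1, e2]
  -- the hard part: identify fstar(-conj mu)
  have hfs : ∀ mu : ℂ, fstar (-(starRingEnd ℂ mu)) = ContinuousLinearMap.adjoint (R mu) f := by
    intro mu
    rw [hf]
    have : (1 + (-(starRingEnd ℂ mu)) • ContinuousLinearMap.adjoint B) = star (U mu) := by
      simp [hUdef, star_sub, star_smul, ContinuousLinearMap.star_eq_adjoint, sub_eq_add_neg]
    rw [this, Ring.inverse_star, ← ContinuousLinearMap.star_eq_adjoint]
  have main : ∀ lam mu : ℂ, mu ≠ lam →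
      (inner ℂ (fstar (-(starRingEnd ℂ mu))) (gfun lam) : ℂ)
        = (mu - lam)⁻¹ * ((1 - φ mu) - (1 - φ lam)) := by
    intro lam mu hne
    rw [hfs, ContinuousLinearMap.adjoint_inner_left]
    have hRR : R mu (gfun lam) = (R mu * R lam) g := by rw [hg]; rfl
    have hsub : mu - lam ≠ 0 := sub_ne_zero.mpr hne
    have hRR2 : (R mu * R lam) = (mu - lam)⁻¹ • (mu • R mu - lam • R lam) := by
      rw [← hres, smul_smul, inv_mul_cancel₀ hsub, one_smul]
    rw [hRR, hRR2]
    have h1 : φ mu = 1 - mu * (inner ℂ f (R mu g) : ℂ) := by rw [hφ, hg]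
    have h2 : φ lam = 1 - lam * (inner ℂ f (R lam g) : ℂ) := by rw [hφ, hg]
    simp only [ContinuousLinearMap.smul_apply, ContinuousLinearMap.sub_apply,
      inner_smul_right, inner_sub_right]
    rw [h1, h2]
    ring
  constructor
  · intro lam mu hlam hne
    rw [main lam mu hne, hlam]
    field_simp
    ring
  · intro lam nu hlam hnu hne
    rw [main lam nu (Ne.symm hne), hnu, hlam]
    ring
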